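/- For every integer n ≥ 1, the function φ_n(x) = ∫₀^π e^{-2x sin η} e^{i·2nη} dη (which is real-valued) satisfies the ordinary differential equation φ_n''(x) + x⁻¹ φ_n'(x) - 4(1 + n²/x²) φ_n(x) = -4/x for all x > 0. -/

import Mathlib

open Real MeasureTheory

/-- The universal function `φ_n`. -/
noncomputable def phi (n : ℕ) (x : ℝ) : ℝ :=
  ∫ η in (0:ℝ)..π, Real.exp (-2 * x * Real.sin η) * Real.cos (2 * n * η)

noncomputable def psi1 (n : ℕ) (x : ℝ) : ℝ :=
  ∫ η in (0:ℝ)..π, Real.exp (-2 * x * Real.sin η) * (-2 * Real.sin η) * Real.cos (2 * n * η)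

noncomputable def psi2 (n : ℕ) (x : ℝ) : ℝ :=
  ∫ η in (0:ℝ)..π,
    Real.exp (-2 * x * Real.sin η) * (-2 * Real.sin η) * (-2 * Real.sin η) * Real.cos (2 * n * η)

lemma hexpC (η C x : ℝ) :
    HasDerivAt (fun y : ℝ => Real.exp (-2 * y * Real.sin η) * C)
      (Real.exp (-2 * x * Real.sin η) * (-2 * Real.sin η) * C) x := by
  have h0 : HasDerivAt (fun y : ℝ => -2 * y * Real.sin η) (-2 * Real.sin η) x := by
    have e : (fun y : ℝ => -2 * y * Real.sin η) = fun y : ℝ => -2 * Real.sin η * y := by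
      funext y; ring
    rw [e]; simpa using (hasDerivAt_id x).const_mul (-2 * Real.sin η)
  exact h0.exp.mul_const C

lemma ball_exp_bound {x₀ y : ℝ} (hy : y ∈ Metric.ball x₀ 1) (η : ℝ) :
    Real.exp (-2 * y * Real.sin η) ≤ Real.exp (2 * (|x₀| + 1)) := by
  apply Real.exp_le_exp.2
  have hy' : |y| ≤ |x₀| + 1 := by
    have := abs_sub_abs_le_abs_sub y x₀
    rw [Metric.mem_ball, Real.dist_eq] at hy
    linarith
  calc -2 * y * Real.sin η ≤ |(-2 * y * Real.sin η)| := le_abs_self _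
    _ = 2 * |y| * |Real.sin η| := by rw [abs_mul, abs_mul]; norm_num
    _ ≤ 2 * (|x₀| + 1) * 1 := by
        have h2 : 2 * |y| ≤ 2 * (|x₀| + 1) := by linarith
        exact mul_le_mul h2 (Real.abs_sin_le_one η) (abs_nonneg _) (by positivity)
    _ = 2 * (|x₀| + 1) := by ring

lemma lemA (n : ℕ) (x₀ : ℝ) : HasDerivAt (phi n) (psi1 n x₀) x₀ := by
  have key := intervalIntegral.hasDerivAt_integral_of_dominated_loc_of_deriv_le
    (μ := volume) (a := (0:ℝ)) (b := π)
    (F := fun x η => Real.exp (-2 * x * Real.sin η) * Real.cos (2 * n * η))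
    (F' := fun x η => Real.exp (-2 * x * Real.sin η) * (-2 * Real.sin η) * Real.cos (2 * n * η))
    (x₀ := x₀) (bound := fun _ => 2 * Real.exp (2 * (|x₀| + 1))) (s := Metric.ball x₀ 1)
    (Metric.ball_mem_nhds x₀ one_pos)
    (Filter.Eventually.of_forall fun x => (Continuous.aestronglyMeasurable (by fun_prop)))
    (Continuous.intervalIntegrable (by fun_prop) _ _)
    (Continuous.aestronglyMeasurable (by fun_prop))
    (Filter.Eventually.of_forall fun η _ => by
      intro y hy
      rw [Real.norm_eq_abs, abs_mul, abs_mul, Real.abs_exp]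
      have hb1 : Real.exp (-2 * y * Real.sin η) ≤ Real.exp (2 * (|x₀| + 1)) :=
        ball_exp_bound hy η
      have hb2 : |(-2 * Real.sin η)| ≤ 2 := by
        calc |(-2 * Real.sin η)| = 2 * |Real.sin η| := by rw [abs_mul]; norm_num
          _ ≤ 2 * 1 := by
              have := Real.abs_sin_le_one η; linarith
          _ = 2 := by ring
      calc Real.exp (-2 * y * Real.sin η) * |(-2 * Real.sin η)| * |Real.cos (2 * n * η)|
          ≤ Real.exp (2 * (|x₀| + 1)) * 2 * 1 :=
            mul_le_mul (mul_le_mul hb1 hb2 (abs_nonneg _) (Real.exp_nonneg _))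
              (Real.abs_cos_le_one _) (abs_nonneg _) (by positivity)
        _ = 2 * Real.exp (2 * (|x₀| + 1)) := by ring)
    (Continuous.intervalIntegrable (by fun_prop) _ _)
    (Filter.Eventually.of_forall fun η _ => by
      intro y _
      exact hexpC η (Real.cos (2 * n * η)) y)
  exact key.2

lemma lemB (n : ℕ) (x₀ : ℝ) : HasDerivAt (psi1 n) (psi2 n x₀) x₀ := by
  have key := intervalIntegral.hasDerivAt_integral_of_dominated_loc_of_deriv_le
    (μ := volume) (a := (0:ℝ)) (b := π)
    (F := fun x η => Real.exp (-2 * x * Real.sin η) * (-2 * Real.sin η) * Real.cos (2 * n * η))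
    (F' := fun x η => Real.exp (-2 * x * Real.sin η) * (-2 * Real.sin η) * (-2 * Real.sin η)
      * Real.cos (2 * n * η))
    (x₀ := x₀) (bound := fun _ => 4 * Real.exp (2 * (|x₀| + 1))) (s := Metric.ball x₀ 1)
    (Metric.ball_mem_nhds x₀ one_pos)
    (Filter.Eventually.of_forall fun x => (Continuous.aestronglyMeasurable (by fun_prop)))
    (Continuous.intervalIntegrable (by fun_prop) _ _)
    (Continuous.aestronglyMeasurable (by fun_prop))
    (Filter.Eventually.of_forall fun η _ => by
      intro y hy
      rw [Real.norm_eq_abs, abs_mul, abs_mul, abs_mul, Real.abs_exp]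
      have hb1 : Real.exp (-2 * y * Real.sin η) ≤ Real.exp (2 * (|x₀| + 1)) :=
        ball_exp_bound hy η
      have hb2 : |(-2 * Real.sin η)| ≤ 2 := by
        calc |(-2 * Real.sin η)| = 2 * |Real.sin η| := by rw [abs_mul]; norm_num
          _ ≤ 2 * 1 := by
              have := Real.abs_sin_le_one η; linarith
          _ = 2 := by ring
      calc Real.exp (-2 * y * Real.sin η) * |(-2 * Real.sin η)| * |(-2 * Real.sin η)|
            * |Real.cos (2 * n * η)|
          ≤ Real.exp (2 * (|x₀| + 1)) * 2 * 2 * 1 :=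
            mul_le_mul
              (mul_le_mul (mul_le_mul hb1 hb2 (abs_nonneg _) (Real.exp_nonneg _)) hb2
                (abs_nonneg _) (by positivity)) (Real.abs_cos_le_one _) (abs_nonneg _)
              (by positivity)
        _ = 4 * Real.exp (2 * (|x₀| + 1)) := by ring)
    (Continuous.intervalIntegrable (by fun_prop) _ _)
    (Filter.Eventually.of_forall fun η _ => by
      intro y _
      have h := hexpC η ((-2 * Real.sin η) * Real.cos (2 * n * η)) y
      have e : (fun z : ℝ => Real.exp (-2 * z * Real.sin η)
          * ((-2 * Real.sin η) * Real.cos (2 * n * η)))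
          = fun z : ℝ => Real.exp (-2 * z * Real.sin η) * (-2 * Real.sin η)
            * Real.cos (2 * n * η) := by
        funext z; ring
      rw [e] at h
      exact h.congr_deriv (by ring))
  exact key.2

noncomputable def Faux (n : ℕ) (x η : ℝ) : ℝ :=
  Real.exp (-2 * x * Real.sin η)
    * (2 * n * Real.sin (2 * n * η) - 2 * x * (Real.cos η * Real.cos (2 * n * η)))

lemma hFaux (n : ℕ) (x η : ℝ) :
    HasDerivAt (Faux n x)
      (Real.exp (-2 * x * Real.sin η)
        * ((4 * x ^ 2 * Real.cos η ^ 2 + 2 * x * Real.sin η + 4 * (n : ℝ) ^ 2)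
          * Real.cos (2 * n * η))) η := by
  have hs : HasDerivAt (fun t : ℝ => -2 * x * Real.sin t) (-2 * x * Real.cos η) η := by
    simpa using (Real.hasDerivAt_sin η).const_mul (-2 * x)
  have harg : HasDerivAt (fun t : ℝ => 2 * (n : ℝ) * t) (2 * (n : ℝ)) η := by
    simpa using (hasDerivAt_id η).const_mul (2 * (n : ℝ))
  have h1 := harg.sin.const_mul (2 * (n : ℝ))
  have h2 := ((Real.hasDerivAt_cos η).mul harg.cos).const_mul (2 * x)
  have hv := h1.sub h2
  have hF := hs.exp.mul hv
  exact hF.congr_deriv (by simp only [Pi.sub_apply, Pi.mul_apply]; ring)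

theorem stmt_1 (n : ℕ) (hn : 1 ≤ n) (x : ℝ) (hx : 0 < x) :
    deriv (deriv (phi n)) x + x⁻¹ * deriv (phi n) x
      - 4 * (1 + (n : ℝ)^2 / x^2) * phi n x = -4 / x := by
  have hx0 : x ≠ 0 := ne_of_gt hx
  have hd1 : deriv (phi n) = psi1 n := funext fun y => (lemA n y).deriv
  have hd2 : deriv (deriv (phi n)) x = psi2 n x := by rw [hd1]; exact (lemB n x).deriv
  rw [hd2, hd1]
  have hi0 : IntervalIntegrable
      (fun η => Real.exp (-2 * x * Real.sin η) * Real.cos (2 * n * η)) volume 0 π :=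
    Continuous.intervalIntegrable (by fun_prop) _ _
  have hi1 : IntervalIntegrable
      (fun η => Real.exp (-2 * x * Real.sin η) * (-2 * Real.sin η) * Real.cos (2 * n * η))
      volume 0 π := Continuous.intervalIntegrable (by fun_prop) _ _
  have hi2 : IntervalIntegrable
      (fun η => Real.exp (-2 * x * Real.sin η) * (-2 * Real.sin η) * (-2 * Real.sin η)
        * Real.cos (2 * n * η)) volume 0 π := Continuous.intervalIntegrable (by fun_prop) _ _
  have hsin : Real.sin (2 * (n : ℝ) * π) = 0 := by
    have e : (2 * (n : ℝ) * π) = ((2 * n : ℕ) : ℝ) * π := by push_cast; ring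
    rw [e, Real.sin_nat_mul_pi]
  have hcos : Real.cos (2 * (n : ℝ) * π) = 1 := by
    have e : (2 * (n : ℝ) * π) = ((n : ℕ) : ℝ) * (2 * π) := by push_cast; ring
    rw [e, Real.cos_nat_mul_two_pi]
  have hint : (∫ η in (0:ℝ)..π, Real.exp (-2 * x * Real.sin η)
      * ((4 * x ^ 2 * Real.cos η ^ 2 + 2 * x * Real.sin η + 4 * (n : ℝ) ^ 2)
        * Real.cos (2 * n * η))) = Faux n x π - Faux n x 0 :=
    intervalIntegral.integral_eq_sub_of_hasDerivAt (fun η _ => hFaux n x η)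
      (Continuous.intervalIntegrable (by fun_prop) _ _)
  have hval : Faux n x π - Faux n x 0 = 4 * x := by
    simp [Faux, hsin, hcos]
    ring
  have hcomb : psi2 n x + x⁻¹ * psi1 n x - 4 * (1 + (n : ℝ)^2 / x^2) * phi n x
      = ∫ η in (0:ℝ)..π,
        (Real.exp (-2 * x * Real.sin η) * (-2 * Real.sin η) * (-2 * Real.sin η)
            * Real.cos (2 * n * η)
          + x⁻¹ * (Real.exp (-2 * x * Real.sin η) * (-2 * Real.sin η) * Real.cos (2 * n * η))
          - 4 * (1 + (n : ℝ)^2 / x^2)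
            * (Real.exp (-2 * x * Real.sin η) * Real.cos (2 * n * η))) := by
    rw [intervalIntegral.integral_sub (hi2.add (hi1.const_mul _)) (hi0.const_mul _),
      intervalIntegral.integral_add hi2 (hi1.const_mul _),
      intervalIntegral.integral_const_mul, intervalIntegral.integral_const_mul]
    simp only [phi, psi1, psi2]
  rw [hcomb]
  have hptw : Set.EqOn
      (fun η =>
        Real.exp (-2 * x * Real.sin η) * (-2 * Real.sin η) * (-2 * Real.sin η)
            * Real.cos (2 * n * η)
          + x⁻¹ * (Real.exp (-2 * x * Real.sin η) * (-2 * Real.sin η) * Real.cos (2 * n * η))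
          - 4 * (1 + (n : ℝ)^2 / x^2)
            * (Real.exp (-2 * x * Real.sin η) * Real.cos (2 * n * η)))
      (fun η => (-(x ^ 2)⁻¹) * (Real.exp (-2 * x * Real.sin η)
        * ((4 * x ^ 2 * Real.cos η ^ 2 + 2 * x * Real.sin η + 4 * (n : ℝ) ^ 2)
          * Real.cos (2 * n * η))))
      (Set.uIcc (0:ℝ) π) := by
    intro η _
    have hsc := Real.sin_sq_add_cos_sq η
    simp only
    set e := Real.exp (-2 * x * Real.sin η) with he
    field_simp
    linear_combination (4 * x ^ 2 * e * Real.cos (2 * (n : ℝ) * η)) * hsc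
  rw [intervalIntegral.integral_congr hptw, intervalIntegral.integral_const_mul, hint, hval]
  field_simp
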